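/- Let d > 6 be an integer. There exists a constant C = C(d) > 0 such that for all w, y ∈ ℤ^d with w ≠ y, one has ∑_{u, v ∈ ℤ^d} |u − v|^{2−d} |v − w|^{2−d} |w − u|^{2−d} |y − u|^{2−d} ≤ C |w − y|^{2−d}, where terms in which any of u − v, v − w, w − u, y − u vanishes are omitted from the sum. -/

import Mathlib

open scoped ENNReal

noncomputable def latPow {d : ℕ} (x : Fin d → ℤ) (a : ℝ) : ℝ≥0∞ :=
  if x = 0 then 0 else ENNReal.ofReal (‖x‖ ^ a)

namespace S12

variable {d : ℕ}

noncomputable def G (m : ℕ) (x : Fin d → ℤ) : ℝ≥0∞ :=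
  if x = 0 then 0 else (ENNReal.ofReal ‖x‖ ^ m)⁻¹

lemma one_le_norm {x : Fin d → ℤ} (hx : x ≠ 0) : (1:ℝ) ≤ ‖x‖ := by
  obtain ⟨i, hi⟩ : ∃ i, x i ≠ 0 := by
    by_contra h; push_neg at h; exact hx (funext h)
  calc (1:ℝ) ≤ ‖x i‖ := by
        rw [Int.norm_eq_abs]
        exact_mod_cast Int.one_le_abs hi
    _ ≤ ‖x‖ := norm_le_pi_norm x i

lemma ofReal_norm_ne_zero {x : Fin d → ℤ} (hx : x ≠ 0) : ENNReal.ofReal ‖x‖ ≠ 0 := by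
  have := one_le_norm hx
  simp only [Ne, ENNReal.ofReal_eq_zero, not_le]
  linarith

lemma pow2_ne_top (m : ℕ) : (2:ℝ≥0∞)^m ≠ ∞ := ENNReal.pow_ne_top ENNReal.ofNat_ne_top

lemma G_eq {m : ℕ} {x : Fin d → ℤ} (hx : x ≠ 0) :
    G m x = (ENNReal.ofReal ‖x‖ ^ m)⁻¹ := if_neg hx

lemma G_even (m : ℕ) (x : Fin d → ℤ) : G m (-x) = G m x := by
  unfold G; simp only [norm_neg, neg_eq_zero]

lemma G_sub_comm (m : ℕ) (x y : Fin d → ℤ) : G m (x - y) = G m (y - x) := by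
  rw [← G_even m (x - y), neg_sub]

lemma G_le {m : ℕ} {x : Fin d → ℤ} {c : ℝ} (h : c ≤ ‖x‖) :
    G m x ≤ (ENNReal.ofReal c ^ m)⁻¹ := by
  unfold G
  split
  · exact zero_le
  · exact ENNReal.inv_le_inv' (pow_le_pow_left₀ (by positivity) (ENNReal.ofReal_le_ofReal h) m)

lemma G_le_one (m : ℕ) (x : Fin d → ℤ) : G m x ≤ 1 := by
  unfold G
  split
  · exact zero_le
  · rw [ENNReal.inv_le_one]
    refine one_le_pow_of_one_le' ?_ m
    rw [← ENNReal.ofReal_one]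
    exact ENNReal.ofReal_le_ofReal (one_le_norm (by assumption))

lemma G_mul (s t : ℕ) (x : Fin d → ℤ) : G s x * G t x = G (s + t) x := by
  unfold G
  split
  · simp
  · next hx =>
    rw [pow_add, ENNReal.mul_inv (Or.inl (pow_ne_zero _ (ofReal_norm_ne_zero hx)))
      (Or.inl (ENNReal.pow_ne_top ENNReal.ofReal_ne_top))]

lemma pow_mul_pow_inv {X : ℝ≥0∞} (hX : X ≠ 0) (hX' : X ≠ ∞) {e f g : ℕ} (h : e + f = g) :
    X ^ e * (X ^ g)⁻¹ = (X ^ f)⁻¹ := by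
  subst h
  rw [pow_add, ENNReal.mul_inv (Or.inl (pow_ne_zero e hX)) (Or.inl (ENNReal.pow_ne_top hX')),
    ← mul_assoc, ENNReal.mul_inv_cancel (pow_ne_zero e hX) (ENNReal.pow_ne_top hX'), one_mul]

lemma pow_mul_pow_inv' {X : ℝ≥0∞} (hX : X ≠ 0) (hX' : X ≠ ∞) {e f g : ℕ} (h : e = f + g) :
    X ^ e * (X ^ g)⁻¹ = X ^ f := by
  subst h
  rw [pow_add, mul_assoc, ENNReal.mul_inv_cancel (pow_ne_zero g hX) (ENNReal.pow_ne_top hX'), mul_one]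

lemma half_inv_pow {r : ℝ} (hr : 0 ≤ r) (m : ℕ) :
    (ENNReal.ofReal (r/2) ^ m)⁻¹ = 2 ^ m * (ENNReal.ofReal r ^ m)⁻¹ := by
  have h2 : ENNReal.ofReal r = 2 * ENNReal.ofReal (r/2) := by
    rw [← ENNReal.ofReal_ofNat 2, ← ENNReal.ofReal_mul (by norm_num)]
    congr 1; ring
  have ha : ((2:ℝ≥0∞)^m) ≠ 0 := by positivity
  rw [h2, mul_pow, ENNReal.mul_inv (Or.inl ha) (Or.inl (pow2_ne_top m)),
    ← mul_assoc, ENNReal.mul_inv_cancel ha (pow2_ne_top m), one_mul]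

lemma tsum_indicator_le (c : ℝ≥0∞) (P : (Fin d → ℤ) → Prop) [DecidablePred P] (m : ℕ)
    (h : ∀ x, P x → ∀ i, |x i| ≤ (m:ℤ)) :
    ∑' x : Fin d → ℤ, (if P x then c else 0) ≤ ((2*m+1 : ℕ) : ℝ≥0∞) ^ d * c := by
  classical
  set B := Fintype.piFinset (fun _ : Fin d => Finset.Icc (-(m:ℤ)) m) with hB
  have h0 : ∀ x ∉ B, (if P x then c else 0) = 0 := by
    intro x hx
    rw [if_neg]
    intro hP
    apply hx
    rw [hB, Fintype.mem_piFinset]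
    intro i
    rw [Finset.mem_Icc]
    exact abs_le.mp (h x hP i)
  rw [tsum_eq_sum h0]
  have hcard : B.card = (2*m+1)^d := by
    rw [hB, Fintype.card_piFinset]
    simp only [Int.card_Icc]
    have : ((m:ℤ) + 1 - -(m:ℤ)).toNat = 2*m+1 := by omega
    rw [this, Finset.prod_const, Finset.card_univ, Fintype.card_fin]
  calc ∑ x ∈ B, (if P x then c else 0) ≤ ∑ _x ∈ B, c :=
        Finset.sum_le_sum (fun x _ => by split <;> simp)
    _ = B.card • c := (Finset.sum_const c)
    _ = ((2*m+1 : ℕ) : ℝ≥0∞) ^ d * c := by rw [hcard, nsmul_eq_mul]; norm_cast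

lemma shell_sum (s : ℕ) {ρ : ℝ} (hρ : 1/2 ≤ ρ) (k : ℕ) :
    ∑' x : Fin d → ℤ, (if (ρ * 2^k ≤ ‖x‖ ∧ ‖x‖ < ρ * 2^(k+1)) then G s x else 0)
      ≤ 6 ^ d * ENNReal.ofReal (ρ * 2^k) ^ d * (ENNReal.ofReal (ρ * 2^k) ^ s)⁻¹ := by
  classical
  have hρ0 : (0:ℝ) < ρ := by linarith
  have h2k : (1:ℝ) ≤ 2^k := one_le_pow₀ (by norm_num)
  have hbase : (1:ℝ) ≤ 2 * (ρ * 2^k) := by nlinarith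
  set c : ℝ≥0∞ := (ENNReal.ofReal (ρ * 2^k) ^ s)⁻¹ with hc
  have step1 : ∑' x : Fin d → ℤ, (if (ρ * 2^k ≤ ‖x‖ ∧ ‖x‖ < ρ * 2^(k+1)) then G s x else 0)
      ≤ ∑' x : Fin d → ℤ, (if (ρ * 2^k ≤ ‖x‖ ∧ ‖x‖ < ρ * 2^(k+1)) then c else 0) := by
    refine ENNReal.tsum_le_tsum (fun x => ?_)
    split
    · next hx => exact G_le hx.1
    · exact le_rfl
  set m : ℕ := ⌊ρ * 2^(k+1)⌋₊ with hm
  have step2 : ∑' x : Fin d → ℤ, (if (ρ * 2^k ≤ ‖x‖ ∧ ‖x‖ < ρ * 2^(k+1)) then c else 0)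
      ≤ ((2*m+1 : ℕ) : ℝ≥0∞) ^ d * c := by
    refine tsum_indicator_le c _ m (fun x hx i => ?_)
    have h1 : ‖x i‖ ≤ ‖x‖ := norm_le_pi_norm x i
    have h2 : ((x i).natAbs : ℝ) < ρ * 2^(k+1) := by
      have : ‖x i‖ = ((x i).natAbs : ℝ) := by
        rw [Int.norm_eq_abs]
        rw [Nat.cast_natAbs, Int.cast_abs]
      rw [← this]
      exact lt_of_le_of_lt h1 hx.2
    have h3 : (x i).natAbs ≤ m := Nat.le_floor h2.le
    calc |x i| = ((x i).natAbs : ℤ) := Int.abs_eq_natAbs _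
      _ ≤ (m : ℤ) := by exact_mod_cast h3
  have hcast : ((2*m+1 : ℕ) : ℝ≥0∞) ≤ 6 * ENNReal.ofReal (ρ * 2^k) := by
    have hr1 : (m : ℝ) ≤ ρ * 2^(k+1) := Nat.floor_le (by positivity)
    have hr2 : ((2*m+1 : ℕ) : ℝ) ≤ 6 * (ρ * 2^k) := by
      push_cast
      have : ρ * 2^(k+1) = 2 * (ρ * 2^k) := by ring
      nlinarith
    calc ((2*m+1 : ℕ) : ℝ≥0∞) = ENNReal.ofReal ((2*m+1 : ℕ) : ℝ) :=
          (ENNReal.ofReal_natCast _).symm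
      _ ≤ ENNReal.ofReal (6 * (ρ * 2^k)) := ENNReal.ofReal_le_ofReal hr2
      _ = 6 * ENNReal.ofReal (ρ * 2^k) := by
          rw [ENNReal.ofReal_mul (by norm_num), ENNReal.ofReal_ofNat]
  calc ∑' x : Fin d → ℤ, (if (ρ * 2^k ≤ ‖x‖ ∧ ‖x‖ < ρ * 2^(k+1)) then G s x else 0)
      ≤ ((2*m+1 : ℕ) : ℝ≥0∞) ^ d * c := step1.trans step2
    _ ≤ (6 * ENNReal.ofReal (ρ * 2^k)) ^ d * c := by gcongr
    _ = 6 ^ d * ENNReal.ofReal (ρ * 2^k) ^ d * c := by rw [mul_pow]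

/-- Existence of the dyadic scale. -/
lemma exists_scale {ρ t : ℝ} (hρ : 0 < ρ) (ht : ρ ≤ t) :
    ∃ k : ℕ, ρ * 2^k ≤ t ∧ t < ρ * 2^(k+1) := by
  have ht1 : (1:ℝ) ≤ t / ρ := (one_le_div hρ).mpr ht
  set n : ℕ := ⌊t / ρ⌋₊ with hn
  have hn0 : n ≠ 0 := by
    have : (1:ℕ) ≤ n := Nat.le_floor (by exact_mod_cast ht1)
    omega
  refine ⟨Nat.log 2 n, ?_, ?_⟩
  · have h1 : ((2^(Nat.log 2 n) : ℕ) : ℝ) ≤ t / ρ :=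
      le_trans (by exact_mod_cast Nat.pow_log_le_self 2 hn0) (Nat.floor_le (by positivity))
    rw [mul_comm]
    rw [← le_div_iff₀ hρ]
    exact_mod_cast h1
  · have h2 : t / ρ < ((2^(Nat.log 2 n + 1) : ℕ) : ℝ) := by
      have hlt : n < 2^(Nat.log 2 n + 1) := Nat.lt_pow_succ_log_self (by norm_num) n
      have : t / ρ < n + 1 := Nat.lt_floor_add_one _
      have h3 : ((n:ℝ) + 1) ≤ ((2^(Nat.log 2 n + 1) : ℕ) : ℝ) := by exact_mod_cast hlt
      linarith
    have := (div_lt_iff₀ hρ).mp h2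
    calc t < ((2^(Nat.log 2 n + 1) : ℕ) : ℝ) * ρ := this
      _ = ρ * 2^(Nat.log 2 n + 1) := by push_cast; ring

lemma tail_sum (s : ℕ) (hs : d < s) :
    ∃ C : ℝ≥0∞, C ≠ ∞ ∧ ∀ r : ℝ, 1 ≤ r →
      ∑' x : Fin d → ℤ, (if r ≤ 2 * ‖x‖ then G s x else 0)
        ≤ C * (ENNReal.ofReal r ^ (s - d))⁻¹ := by
  classical
  refine ⟨2 * 6^d * 2^(s-d),
    ENNReal.mul_ne_top (ENNReal.mul_ne_top ENNReal.ofNat_ne_top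
      (ENNReal.pow_ne_top (by norm_num))) (pow2_ne_top _), fun r hr => ?_⟩
  set ρ : ℝ := r / 2 with hρdef
  have hρ : 1/2 ≤ ρ := by rw [hρdef]; linarith
  have hρ0 : (0:ℝ) < ρ := by linarith
  set Z : ℝ≥0∞ := ENNReal.ofReal ρ with hZ
  have hZ0 : Z ≠ 0 := by
    rw [hZ, Ne, ENNReal.ofReal_eq_zero]
    intro h; linarith
  have hZt : Z ≠ ∞ := ENNReal.ofReal_ne_top
  -- pointwise decomposition into shells
  have step1 : ∀ x : Fin d → ℤ, (if r ≤ 2 * ‖x‖ then G s x else 0)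
      ≤ ∑' k : ℕ, (if (ρ * 2^k ≤ ‖x‖ ∧ ‖x‖ < ρ * 2^(k+1)) then G s x else 0) := by
    intro x
    split
    · next hx =>
      have hx' : ρ ≤ ‖x‖ := by rw [hρdef]; linarith
      obtain ⟨k, hk1, hk2⟩ := exists_scale hρ0 hx'
      refine le_trans ?_ (ENNReal.le_tsum k)
      rw [if_pos ⟨hk1, hk2⟩]
    · exact zero_le
  have hYk : ∀ k : ℕ, ENNReal.ofReal (ρ * 2^k) = Z * 2^k := by
    intro k
    rw [hZ, show ((2:ℝ≥0∞)^k) = ENNReal.ofReal ((2:ℝ)^k) from by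
      rw [ENNReal.ofReal_pow (by norm_num), ENNReal.ofReal_ofNat],
      ← ENNReal.ofReal_mul hρ0.le]
  calc ∑' x : Fin d → ℤ, (if r ≤ 2 * ‖x‖ then G s x else 0)
      ≤ ∑' x : Fin d → ℤ, ∑' k : ℕ, (if (ρ * 2^k ≤ ‖x‖ ∧ ‖x‖ < ρ * 2^(k+1)) then G s x else 0) :=
        ENNReal.tsum_le_tsum step1
    _ = ∑' k : ℕ, ∑' x : Fin d → ℤ, (if (ρ * 2^k ≤ ‖x‖ ∧ ‖x‖ < ρ * 2^(k+1)) then G s x else 0) :=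
        ENNReal.tsum_comm
    _ ≤ ∑' k : ℕ, 6 ^ d * ENNReal.ofReal (ρ * 2^k) ^ d * (ENNReal.ofReal (ρ * 2^k) ^ s)⁻¹ :=
        ENNReal.tsum_le_tsum (fun k => shell_sum s hρ k)
    _ = ∑' k : ℕ, 6 ^ d * ((Z * 2^k) ^ (s - d))⁻¹ := by
        refine tsum_congr (fun k => ?_)
        rw [hYk k, mul_assoc]
        congr 1
        refine pow_mul_pow_inv (mul_ne_zero hZ0 (by positivity))
          (ENNReal.mul_ne_top hZt (pow2_ne_top k)) ?_
        omega
    _ ≤ 2 * 6^d * 2^(s-d) * (ENNReal.ofReal r ^ (s - d))⁻¹ := by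
        have hzr : ENNReal.ofReal r = 2 * Z := by
          rw [hZ, hρdef, ← ENNReal.ofReal_ofNat 2, ← ENNReal.ofReal_mul (by norm_num)]
          congr 1; ring
        have hsplit : ∀ k : ℕ, ((Z * 2^k) ^ (s - d))⁻¹
            = (Z ^ (s-d))⁻¹ * ((2:ℝ≥0∞)⁻¹ ^ (s-d))^k := by
          intro k
          rw [mul_pow, ENNReal.mul_inv (Or.inl (pow_ne_zero _ hZ0))
            (Or.inl (ENNReal.pow_ne_top hZt))]
          congr 1
          simp [← ENNReal.inv_pow, ← pow_mul, Nat.mul_comm]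
        calc ∑' k : ℕ, 6 ^ d * ((Z * 2^k) ^ (s - d))⁻¹
            = 6 ^ d * (Z ^ (s-d))⁻¹ * ∑' k : ℕ, ((2:ℝ≥0∞)⁻¹ ^ (s-d))^k := by
              rw [← ENNReal.tsum_mul_left]
              refine tsum_congr (fun k => ?_)
              rw [hsplit k, mul_assoc]
          _ ≤ 6 ^ d * (Z ^ (s-d))⁻¹ * 2 := by
              gcongr
              rw [ENNReal.tsum_geometric]
              have hle : (2:ℝ≥0∞)⁻¹ ^ (s-d) ≤ 2⁻¹ := by
                have h1 : 1 ≤ s - d := by omega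
                calc (2:ℝ≥0∞)⁻¹ ^ (s-d) ≤ 2⁻¹ ^ 1 :=
                      pow_le_pow_of_le_one (zero_le) (ENNReal.inv_le_one.mpr one_le_two) h1
                  _ = 2⁻¹ := pow_one _
              calc (1 - (2:ℝ≥0∞)⁻¹ ^ (s-d))⁻¹ ≤ (1 - (2:ℝ≥0∞)⁻¹)⁻¹ :=
                    ENNReal.inv_le_inv' (tsub_le_tsub_left hle 1)
                _ = 2 := by rw [ENNReal.one_sub_inv_two, inv_inv]
          _ = 2 * 6^d * 2^(s-d) * (ENNReal.ofReal r ^ (s - d))⁻¹ := by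
              have hx : (ENNReal.ofReal r ^ (s - d))⁻¹ = (2^(s-d))⁻¹ * (Z ^ (s-d))⁻¹ := by
                rw [hzr, mul_pow, ENNReal.mul_inv (Or.inl (by positivity))
                  (Or.inl (ENNReal.pow_ne_top ENNReal.ofNat_ne_top))]
              rw [hx, show (2:ℝ≥0∞) * 6^d * 2^(s-d) * ((2^(s-d))⁻¹ * (Z ^ (s-d))⁻¹)
                  = (2^(s-d) * (2^(s-d))⁻¹) * (2 * 6^d * (Z ^ (s-d))⁻¹) from by ring,
                ENNReal.mul_inv_cancel (by positivity) (pow2_ne_top _), one_mul]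
              ring

lemma geo_aux (n : ℕ) : ∑ k ∈ Finset.range n, (2:ℝ≥0∞)^k ≤ 2^n := by
  induction n with
  | zero => simp
  | succ n ih =>
    rw [Finset.sum_range_succ, pow_succ]
    calc ∑ k ∈ Finset.range n, (2:ℝ≥0∞)^k + 2^n ≤ 2^n + 2^n := add_le_add_left ih _
      _ = 2^n * 2 := by ring

lemma two_pow_eq (k : ℕ) : ENNReal.ofReal ((2:ℝ)^k) = (2:ℝ≥0∞)^k := by
  rw [ENNReal.ofReal_pow (by norm_num), ENNReal.ofReal_ofNat]

lemma geo_sum {r : ℝ} (hr : 1 ≤ r) :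
    ∑' k : ℕ, (if (2:ℝ)^k ≤ r then ((2:ℝ≥0∞)^k) else 0) ≤ 2 * ENNReal.ofReal r := by
  classical
  set K := Nat.log 2 ⌊r⌋₊ with hK
  have hfl : ⌊r⌋₊ ≠ 0 := by
    have : (1:ℕ) ≤ ⌊r⌋₊ := Nat.le_floor (by exact_mod_cast hr)
    omega
  have hsupp : ∀ k ∉ Finset.range (K+1), (if (2:ℝ)^k ≤ r then ((2:ℝ≥0∞)^k) else 0) = 0 := by
    intro k hk
    rw [if_neg]
    intro h
    apply hk
    rw [Finset.mem_range]
    have h2 : (2:ℕ)^k ≤ ⌊r⌋₊ := Nat.le_floor (by exact_mod_cast h)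
    have := (Nat.le_log_iff_pow_le (by norm_num) hfl).mpr h2
    omega
  rw [tsum_eq_sum hsupp]
  calc ∑ k ∈ Finset.range (K+1), (if (2:ℝ)^k ≤ r then ((2:ℝ≥0∞)^k) else 0)
      ≤ ∑ k ∈ Finset.range (K+1), (2:ℝ≥0∞)^k :=
        Finset.sum_le_sum (fun k _ => by split <;> simp)
    _ ≤ 2^(K+1) := geo_aux _
    _ = 2 * 2^K := by rw [pow_succ]; ring
    _ ≤ 2 * ENNReal.ofReal r := by
        gcongr
        have h1 : ((2^K : ℕ):ℝ) ≤ r :=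
          le_trans (by exact_mod_cast Nat.pow_log_le_self 2 hfl) (Nat.floor_le (by linarith))
        calc (2:ℝ≥0∞)^K = ENNReal.ofReal ((2:ℝ)^K) := (two_pow_eq K).symm
          _ ≤ ENNReal.ofReal r := ENNReal.ofReal_le_ofReal (by exact_mod_cast h1)

lemma ball_sum (a : ℕ) (had : a < d) :
    ∃ C : ℝ≥0∞, C ≠ ∞ ∧ ∀ r : ℝ, 1 ≤ r →
      ∑' x : Fin d → ℤ, (if ‖x‖ ≤ r then G a x else 0)
        ≤ C * ENNReal.ofReal r ^ (d - a) := by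
  classical
  refine ⟨2 * 6^d, ENNReal.mul_ne_top ENNReal.ofNat_ne_top (ENNReal.pow_ne_top (by norm_num)),
    fun r hr => ?_⟩
  set X : ℝ≥0∞ := ENNReal.ofReal r with hX
  have step1 : ∀ x : Fin d → ℤ, (if ‖x‖ ≤ r then G a x else 0)
      ≤ ∑' k : ℕ, (if ((1:ℝ) * 2^k ≤ ‖x‖ ∧ ‖x‖ < 1 * 2^(k+1)) ∧ (2:ℝ)^k ≤ r
          then G a x else 0) := by
    intro x
    split
    · next hx =>
      by_cases hx0 : x = 0
      · rw [hx0]; unfold G; simp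
      · have h1 : (1:ℝ) ≤ ‖x‖ := one_le_norm hx0
        obtain ⟨k, hk1, hk2⟩ := exists_scale one_pos h1
        have hside : (2:ℝ)^k ≤ r := by
          have : (1:ℝ) * 2^k ≤ r := le_trans hk1 hx
          linarith
        refine le_trans ?_ (ENNReal.le_tsum k)
        rw [if_pos ⟨⟨hk1, hk2⟩, hside⟩]
    · exact zero_le
  calc ∑' x : Fin d → ℤ, (if ‖x‖ ≤ r then G a x else 0)
      ≤ ∑' x : Fin d → ℤ, ∑' k : ℕ, (if ((1:ℝ) * 2^k ≤ ‖x‖ ∧ ‖x‖ < 1 * 2^(k+1)) ∧ (2:ℝ)^k ≤ r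
          then G a x else 0) := ENNReal.tsum_le_tsum step1
    _ = ∑' k : ℕ, ∑' x : Fin d → ℤ, (if ((1:ℝ) * 2^k ≤ ‖x‖ ∧ ‖x‖ < 1 * 2^(k+1)) ∧ (2:ℝ)^k ≤ r
          then G a x else 0) := ENNReal.tsum_comm
    _ ≤ ∑' k : ℕ, (if (2:ℝ)^k ≤ r then 6^d * X^(d-a-1) * (2:ℝ≥0∞)^k else 0) := by
        refine ENNReal.tsum_le_tsum (fun k => ?_)
        by_cases hk : (2:ℝ)^k ≤ r
        · have hshell := shell_sum (d := d) a (by norm_num : (1:ℝ)/2 ≤ 1) k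
          have hY : ENNReal.ofReal ((1:ℝ) * 2^k) = (2:ℝ≥0∞)^k := by
            rw [one_mul]; exact two_pow_eq k
          have h2k0 : ((2:ℝ≥0∞)^k) ≠ 0 := by positivity
          have hb : 6^d * ENNReal.ofReal ((1:ℝ) * 2^k) ^ d * (ENNReal.ofReal ((1:ℝ) * 2^k) ^ a)⁻¹
              = 6^d * (((2:ℝ≥0∞)^k)^(d-a-1) * (2:ℝ≥0∞)^k) := by
            rw [hY, mul_assoc]
            congr 1
            rw [pow_mul_pow_inv' h2k0 (pow2_ne_top k) (show d = (d-a) + a by omega), ← pow_succ]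
            congr 1
            omega
          rw [if_pos hk]
          refine le_trans (le_trans (ENNReal.tsum_le_tsum (fun x => ?_)) hshell) ?_
          · split
            · next hcond => rw [if_pos hcond.1]
            · exact zero_le
          · rw [hb]
            have hle : ((2:ℝ≥0∞)^k)^(d-a-1) ≤ X^(d-a-1) := by
              gcongr
              rw [hX, ← two_pow_eq k]
              exact ENNReal.ofReal_le_ofReal hk
            calc 6^d * (((2:ℝ≥0∞)^k)^(d-a-1) * (2:ℝ≥0∞)^k)
                ≤ 6^d * (X^(d-a-1) * (2:ℝ≥0∞)^k) := by gcongr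
              _ = 6^d * X^(d-a-1) * (2:ℝ≥0∞)^k := by ring
        · rw [if_neg hk]
          have : ∀ x : Fin d → ℤ, (if ((1:ℝ) * 2^k ≤ ‖x‖ ∧ ‖x‖ < 1 * 2^(k+1)) ∧ (2:ℝ)^k ≤ r
              then G a x else 0) = 0 := by
            intro x
            rw [if_neg]
            intro hcond
            exact hk hcond.2
          simp only [this, tsum_zero]
          exact le_rfl
    _ = 6^d * X^(d-a-1) * ∑' k : ℕ, (if (2:ℝ)^k ≤ r then ((2:ℝ≥0∞)^k) else 0) := by
        rw [← ENNReal.tsum_mul_left]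
        refine tsum_congr (fun k => ?_)
        split
        · rfl
        · rw [mul_zero]
    _ ≤ 6^d * X^(d-a-1) * (2 * X) := by gcongr; exact geo_sum hr
    _ = 2 * 6^d * X^(d-a) := by
        rw [show (6:ℝ≥0∞)^d * X^(d-a-1) * (2 * X) = 2 * 6^d * ((X^(d-a-1)) * X) from by ring,
          ← pow_succ]
        congr 2
        omega

lemma tsum_translate (p : Fin d → ℤ) (f : (Fin d → ℤ) → ℝ≥0∞) :
    ∑' v : Fin d → ℤ, f (v - p) = ∑' x : Fin d → ℤ, f x := by
  have := (Equiv.subRight p).tsum_eq f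
  simpa [Equiv.subRight_apply] using this

lemma conv (a b : ℕ) (had : a < d) (hbd : b < d) (hab : d < a + b) :
    ∃ C : ℝ≥0∞, C ≠ ∞ ∧ ∀ p q : Fin d → ℤ, p ≠ q →
      ∑' v : Fin d → ℤ, G a (v - p) * G b (v - q)
        ≤ C * (ENNReal.ofReal ‖p - q‖ ^ (a + b - d))⁻¹ := by
  classical
  obtain ⟨C1, hC1t, hC1⟩ := ball_sum (d := d) a had
  obtain ⟨C2, hC2t, hC2⟩ := ball_sum (d := d) b hbd
  obtain ⟨C3, hC3t, hC3⟩ := tail_sum (d := d) (a+b) hab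
  refine ⟨2^b * C1 + 2^a * C2 + 2 * C3, by
    refine ENNReal.add_ne_top.mpr ⟨ENNReal.add_ne_top.mpr ⟨?_, ?_⟩, ?_⟩
    · exact ENNReal.mul_ne_top (pow2_ne_top b) hC1t
    · exact ENNReal.mul_ne_top (pow2_ne_top a) hC2t
    · exact ENNReal.mul_ne_top ENNReal.ofNat_ne_top hC3t, fun p q hpq => ?_⟩
  set r : ℝ := ‖p - q‖ with hrdef
  have hpq0 : p - q ≠ 0 := sub_ne_zero.mpr hpq
  have hr : 1 ≤ r := one_le_norm hpq0
  set X : ℝ≥0∞ := ENNReal.ofReal r with hXdef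
  have hX0 : X ≠ 0 := by
    rw [hXdef, Ne, ENNReal.ofReal_eq_zero, not_le]; linarith
  have hXt : X ≠ ∞ := ENNReal.ofReal_ne_top
  have htri : ∀ v : Fin d → ℤ, r ≤ ‖v - p‖ + ‖v - q‖ := by
    intro v
    calc r = ‖(v - q) - (v - p)‖ := by rw [hrdef]; congr 1; ring
      _ ≤ ‖v - q‖ + ‖v - p‖ := norm_sub_le _ _
      _ = ‖v - p‖ + ‖v - q‖ := by ring
  have key : ∀ v : Fin d → ℤ, G a (v - p) * G b (v - q) ≤
      (if ‖v - p‖ ≤ r then G a (v - p) else 0) * (2^b * (X^b)⁻¹)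
      + ((if ‖v - q‖ ≤ r then G b (v - q) else 0) * (2^a * (X^a)⁻¹)
      + ((if r ≤ 2 * ‖v - p‖ then G (a+b) (v - p) else 0)
        + (if r ≤ 2 * ‖v - q‖ then G (a+b) (v - q) else 0))) := by
    intro v
    have hnp := norm_nonneg (v - p)
    have hnq := norm_nonneg (v - q)
    by_cases h1 : 2 * ‖v - p‖ ≤ r
    · have hvq : r / 2 ≤ ‖v - q‖ := by have := htri v; linarith
      have hGb : G b (v - q) ≤ 2^b * (X^b)⁻¹ := by
        refine le_trans (G_le hvq) ?_
        rw [half_inv_pow (by linarith : (0:ℝ) ≤ r) b]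
      have hvpr : ‖v - p‖ ≤ r := by linarith
      refine le_trans ?_ le_self_add
      rw [if_pos hvpr]
      exact mul_le_mul_right hGb _
    · by_cases h2 : 2 * ‖v - q‖ ≤ r
      · have hvp : r / 2 ≤ ‖v - p‖ := by have := htri v; linarith
        have hGa : G a (v - p) ≤ 2^a * (X^a)⁻¹ := by
          refine le_trans (G_le hvp) ?_
          rw [half_inv_pow (by linarith : (0:ℝ) ≤ r) a]
        have hvqr : ‖v - q‖ ≤ r := by linarith
        refine le_trans ?_ (le_trans le_self_add le_add_self)
        rw [if_pos hvqr, mul_comm]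
        exact mul_le_mul_right hGa _
      · push_neg at h1 h2
        have hvp0 : v - p ≠ 0 := by
          intro h; rw [h, norm_zero] at h1; linarith
        have hvq0 : v - q ≠ 0 := by
          intro h; rw [h, norm_zero] at h2; linarith
        refine le_trans ?_ (le_trans le_add_self le_add_self)
        rcases le_total ‖v - p‖ ‖v - q‖ with hle | hle
        · refine le_trans ?_ le_self_add
          rw [if_pos h1.le]
          calc G a (v - p) * G b (v - q) ≤ G a (v - p) * G b (v - p) := by
                refine mul_le_mul_right ?_ _
                rw [G_eq hvq0, G_eq hvp0]
                exact ENNReal.inv_le_inv' (pow_le_pow_left₀ (by positivity)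
                  (ENNReal.ofReal_le_ofReal hle) b)
            _ = G (a+b) (v - p) := G_mul a b _
        · refine le_trans ?_ le_add_self
          rw [if_pos h2.le]
          calc G a (v - p) * G b (v - q) ≤ G a (v - q) * G b (v - q) := by
                refine mul_le_mul_left ?_ _
                rw [G_eq hvq0, G_eq hvp0]
                exact ENNReal.inv_le_inv' (pow_le_pow_left₀ (by positivity)
                  (ENNReal.ofReal_le_ofReal hle) a)
            _ = G (a+b) (v - q) := G_mul a b _
  have hT1 : ∑' v : Fin d → ℤ, (if ‖v - p‖ ≤ r then G a (v - p) else 0) * (2^b * (X^b)⁻¹)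
      ≤ 2^b * C1 * (X ^ (a + b - d))⁻¹ := by
    rw [ENNReal.tsum_mul_right,
      tsum_translate p (fun x => if ‖x‖ ≤ r then G a x else 0)]
    calc (∑' x : Fin d → ℤ, (if ‖x‖ ≤ r then G a x else 0)) * (2^b * (X^b)⁻¹)
        ≤ (C1 * X ^ (d - a)) * (2^b * (X^b)⁻¹) := mul_le_mul_left (hC1 r hr) _
      _ = 2^b * C1 * (X ^ (d-a) * (X^b)⁻¹) := by ring
      _ = 2^b * C1 * (X ^ (a + b - d))⁻¹ := by
          rw [pow_mul_pow_inv hX0 hXt (show (d-a) + (a+b-d) = b by omega)]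
  have hT2 : ∑' v : Fin d → ℤ, (if ‖v - q‖ ≤ r then G b (v - q) else 0) * (2^a * (X^a)⁻¹)
      ≤ 2^a * C2 * (X ^ (a + b - d))⁻¹ := by
    have hrq : r = ‖q - p‖ := by rw [hrdef]; rw [← norm_neg]; congr 1; ring
    rw [ENNReal.tsum_mul_right,
      tsum_translate q (fun x => if ‖x‖ ≤ r then G b x else 0)]
    calc (∑' x : Fin d → ℤ, (if ‖x‖ ≤ r then G b x else 0)) * (2^a * (X^a)⁻¹)
        ≤ (C2 * X ^ (d - b)) * (2^a * (X^a)⁻¹) := mul_le_mul_left (hC2 r hr) _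
      _ = 2^a * C2 * (X ^ (d-b) * (X^a)⁻¹) := by ring
      _ = 2^a * C2 * (X ^ (a + b - d))⁻¹ := by
          rw [pow_mul_pow_inv hX0 hXt (show (d-b) + (a+b-d) = a by omega)]
  have hT3 : ∑' v : Fin d → ℤ, (if r ≤ 2 * ‖v - p‖ then G (a+b) (v - p) else 0)
      ≤ C3 * (X ^ (a + b - d))⁻¹ := by
    rw [tsum_translate p (fun x => if r ≤ 2 * ‖x‖ then G (a+b) x else 0)]
    exact hC3 r hr
  have hT4 : ∑' v : Fin d → ℤ, (if r ≤ 2 * ‖v - q‖ then G (a+b) (v - q) else 0)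
      ≤ C3 * (X ^ (a + b - d))⁻¹ := by
    rw [tsum_translate q (fun x => if r ≤ 2 * ‖x‖ then G (a+b) x else 0)]
    exact hC3 r hr
  calc ∑' v : Fin d → ℤ, G a (v - p) * G b (v - q)
      ≤ ∑' v : Fin d → ℤ, ((if ‖v - p‖ ≤ r then G a (v - p) else 0) * (2^b * (X^b)⁻¹)
      + ((if ‖v - q‖ ≤ r then G b (v - q) else 0) * (2^a * (X^a)⁻¹)
      + ((if r ≤ 2 * ‖v - p‖ then G (a+b) (v - p) else 0)
        + (if r ≤ 2 * ‖v - q‖ then G (a+b) (v - q) else 0)))) := ENNReal.tsum_le_tsum key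
    _ = (∑' v : Fin d → ℤ, (if ‖v - p‖ ≤ r then G a (v - p) else 0) * (2^b * (X^b)⁻¹))
      + ((∑' v : Fin d → ℤ, (if ‖v - q‖ ≤ r then G b (v - q) else 0) * (2^a * (X^a)⁻¹))
      + ((∑' v : Fin d → ℤ, (if r ≤ 2 * ‖v - p‖ then G (a+b) (v - p) else 0))
        + (∑' v : Fin d → ℤ, (if r ≤ 2 * ‖v - q‖ then G (a+b) (v - q) else 0)))) := by
        rw [ENNReal.tsum_add, ENNReal.tsum_add, ENNReal.tsum_add]
    _ ≤ 2^b * C1 * (X ^ (a + b - d))⁻¹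
      + (2^a * C2 * (X ^ (a + b - d))⁻¹
      + (C3 * (X ^ (a + b - d))⁻¹ + C3 * (X ^ (a + b - d))⁻¹)) := by
        gcongr
    _ = (2^b * C1 + 2^a * C2 + 2 * C3) * (X ^ (a + b - d))⁻¹ := by ring

lemma sigma_sum (s : ℕ) (hs : d < s) :
    ∃ C : ℝ≥0∞, C ≠ ∞ ∧ ∀ p : Fin d → ℤ, ∑' v : Fin d → ℤ, G s (v - p) ≤ C := by
  classical
  obtain ⟨C, hCt, hC⟩ := tail_sum (d := d) s hs
  refine ⟨C, hCt, fun p => ?_⟩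
  rw [tsum_translate p (G s)]
  have h2 : ∑' x : Fin d → ℤ, G s x
      = ∑' x : Fin d → ℤ, (if (1:ℝ) ≤ 2 * ‖x‖ then G s x else 0) := by
    refine tsum_congr (fun x => ?_)
    by_cases hx : x = 0
    · subst hx
      simp [G]
    · rw [if_pos]
      have := one_le_norm hx
      linarith
  rw [h2]
  have := hC 1 le_rfl
  simpa using this

lemma ofReal_pow_inv {t : ℝ} (ht : 0 < t) (m : ℕ) :
    ENNReal.ofReal (t ^ (-(m:ℝ))) = (ENNReal.ofReal t ^ m)⁻¹ := by
  rw [Real.rpow_neg ht.le, Real.rpow_natCast, ENNReal.ofReal_inv_of_pos (by positivity),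
    ENNReal.ofReal_pow ht.le]

lemma exp_cast (hd2 : 2 ≤ d) : (2:ℝ) - d = -(((d - 2 : ℕ)):ℝ) := by
  rw [Nat.cast_sub hd2]
  push_cast
  ring

lemma latPow_eq (hd2 : 2 ≤ d) (x : Fin d → ℤ) :
    latPow x ((2:ℝ) - d) = G (d - 2) x := by
  unfold latPow G
  split
  · rfl
  · next hx =>
    have h1 : (1:ℝ) ≤ ‖x‖ := one_le_norm hx
    rw [exp_cast hd2, ofReal_pow_inv (by linarith) (d - 2)]

end S12

theorem statement12 (d : ℕ) (hd : 6 < d) :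
    ∃ C : ℝ, 0 < C ∧ ∀ w y : Fin d → ℤ, w ≠ y →
      ∑' u : Fin d → ℤ, ∑' v : Fin d → ℤ,
        latPow (u - v) ((2 : ℝ) - d) * latPow (v - w) ((2 : ℝ) - d) *
          latPow (w - u) ((2 : ℝ) - d) * latPow (y - u) ((2 : ℝ) - d) ≤
        ENNReal.ofReal (C * ‖w - y‖ ^ ((2 : ℝ) - d)) := by
  classical
  open S12 in
  have hd2 : 2 ≤ d := by omega
  obtain ⟨C1, hC1t, hC1⟩ := S12.conv (d := d) (d-2) (d-2) (by omega) (by omega) (by omega)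
  obtain ⟨C2, hC2t, hC2⟩ := S12.conv (d := d) (d-4) (d-2) (by omega) (by omega) (by omega)
  obtain ⟨C3, hC3t, hC3⟩ := S12.sigma_sum (d := d) (2*d-4) (by omega)
  obtain ⟨C4, hC4t, hC4⟩ := S12.sigma_sum (d := d) (2*d-6) (by omega)
  set Ctot : ℝ≥0∞ := 2^(d-2) * (C1 * C4 + (C1 * C2 + C3)) with hCtotdef
  have hCtotT : Ctot ≠ ∞ := by
    refine ENNReal.mul_ne_top (S12.pow2_ne_top _) (ENNReal.add_ne_top.mpr ⟨?_, ?_⟩)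
    · exact ENNReal.mul_ne_top hC1t hC4t
    · exact ENNReal.add_ne_top.mpr ⟨ENNReal.mul_ne_top hC1t hC2t, hC3t⟩
  refine ⟨max 1 Ctot.toReal, lt_of_lt_of_le one_pos (le_max_left _ _), fun w y hwy => ?_⟩
  set r : ℝ := ‖w - y‖ with hrdef
  have hwy0 : w - y ≠ 0 := sub_ne_zero.mpr hwy
  have hr : 1 ≤ r := S12.one_le_norm hwy0
  set X : ℝ≥0∞ := ENNReal.ofReal r with hXdef
  have hX0 : X ≠ 0 := by rw [hXdef, Ne, ENNReal.ofReal_eq_zero, not_le]; linarith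
  have hXt : X ≠ ∞ := ENNReal.ofReal_ne_top
  have hX1 : 1 ≤ X := by
    rw [hXdef, ← ENNReal.ofReal_one]
    exact ENNReal.ofReal_le_ofReal hr
  set P : ℝ≥0∞ := (X ^ (d-2))⁻¹ with hPdef
  set I : (Fin d → ℤ) → ℝ≥0∞ := fun u => ∑' v, S12.G (d-2) (u - v) * S12.G (d-2) (v - w)
    with hIdef
  have hrw : ∀ u : Fin d → ℤ, (∑' v : Fin d → ℤ,
      latPow (u - v) ((2 : ℝ) - d) * latPow (v - w) ((2 : ℝ) - d) *
        latPow (w - u) ((2 : ℝ) - d) * latPow (y - u) ((2 : ℝ) - d))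
      = I u * (S12.G (d-2) (w - u) * S12.G (d-2) (y - u)) := by
    intro u
    rw [hIdef]
    rw [← ENNReal.tsum_mul_right]
    refine tsum_congr (fun v => ?_)
    rw [S12.latPow_eq hd2, S12.latPow_eq hd2, S12.latPow_eq hd2, S12.latPow_eq hd2]
    ring
  have hIbound : ∀ u, u ≠ w → I u ≤ C1 * S12.G (d-4) (u - w) := by
    intro u hu
    have h0 : I u = ∑' v, S12.G (d-2) (v - u) * S12.G (d-2) (v - w) := by
      rw [hIdef]
      exact tsum_congr (fun v => by rw [S12.G_sub_comm])
    rw [h0]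
    have h := hC1 u w hu
    rw [show (d-2) + (d-2) - d = d - 4 from by omega] at h
    rw [S12.G_eq (sub_ne_zero.mpr hu)]
    exact h
  have hIw : I w ≤ C3 := by
    have h0 : I w = ∑' v, S12.G (2*d-4) (v - w) := by
      rw [hIdef]
      refine tsum_congr (fun v => ?_)
      rw [S12.G_sub_comm (d-2) w v, S12.G_mul]
      congr 1
      omega
    rw [h0]
    exact hC3 w
  have hkey : ∀ u, S12.G (d-2) (w - u) * S12.G (d-2) (y - u)
      ≤ 2^(d-2) * P * (S12.G (d-2) (w - u) + S12.G (d-2) (y - u)) := by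
    intro u
    have htri : r ≤ ‖w - u‖ + ‖y - u‖ := by
      calc r = ‖(w - u) - (y - u)‖ := by rw [hrdef]; congr 1; ring
        _ ≤ ‖w - u‖ + ‖y - u‖ := norm_sub_le _ _
    have hhalf : ∀ z : Fin d → ℤ, r/2 ≤ ‖z‖ → S12.G (d-2) z ≤ 2^(d-2) * P := by
      intro z hz
      refine (S12.G_le hz).trans ?_
      rw [S12.half_inv_pow (by linarith : (0:ℝ) ≤ r) (d-2)]
    rcases le_total (r/2) ‖w - u‖ with h | h
    · calc S12.G (d-2) (w - u) * S12.G (d-2) (y - u)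
          ≤ (2^(d-2) * P) * S12.G (d-2) (y - u) := mul_le_mul_left (hhalf _ h) _
        _ ≤ 2^(d-2) * P * (S12.G (d-2) (w - u) + S12.G (d-2) (y - u)) :=
            mul_le_mul_right le_add_self _
    · have h' : r/2 ≤ ‖y - u‖ := by linarith
      calc S12.G (d-2) (w - u) * S12.G (d-2) (y - u)
          ≤ S12.G (d-2) (w - u) * (2^(d-2) * P) := mul_le_mul_right (hhalf _ h') _
        _ = (2^(d-2) * P) * S12.G (d-2) (w - u) := by ring
        _ ≤ 2^(d-2) * P * (S12.G (d-2) (w - u) + S12.G (d-2) (y - u)) :=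
            mul_le_mul_right le_self_add _
  have hL : ∑' u : Fin d → ℤ, I u * S12.G (d-2) (w - u) ≤ C1 * C4 := by
    calc ∑' u : Fin d → ℤ, I u * S12.G (d-2) (w - u)
        ≤ ∑' u : Fin d → ℤ, C1 * S12.G (2*d-6) (u - w) := by
          refine ENNReal.tsum_le_tsum (fun u => ?_)
          by_cases hu : u = w
          · subst hu
            rw [sub_self]
            simp [S12.G]
          · calc I u * S12.G (d-2) (w - u)
                ≤ (C1 * S12.G (d-4) (u - w)) * S12.G (d-2) (w - u) :=
                  mul_le_mul_left (hIbound u hu) _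
              _ = C1 * (S12.G (d-4) (u - w) * S12.G (d-2) (u - w)) := by
                  rw [S12.G_sub_comm (d-2) w u]; ring
              _ = C1 * S12.G (2*d-6) (u - w) := by
                  rw [S12.G_mul]
                  congr 2
                  omega
      _ = C1 * ∑' u : Fin d → ℤ, S12.G (2*d-6) (u - w) := ENNReal.tsum_mul_left
      _ ≤ C1 * C4 := mul_le_mul_right (hC4 w) _
  have hM : ∑' u : Fin d → ℤ, I u * S12.G (d-2) (y - u) ≤ C1 * C2 + C3 := by
    calc ∑' u : Fin d → ℤ, I u * S12.G (d-2) (y - u)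
        ≤ ∑' u : Fin d → ℤ,
            (C1 * (S12.G (d-4) (u - w) * S12.G (d-2) (u - y)) + (if u = w then C3 else 0)) := by
          refine ENNReal.tsum_le_tsum (fun u => ?_)
          by_cases hu : u = w
          · rw [hu, if_pos rfl]
            refine le_trans ?_ le_add_self
            calc I w * S12.G (d-2) (y - w) ≤ C3 * 1 :=
                  mul_le_mul' hIw (S12.G_le_one _ _)
              _ = C3 := mul_one _
          · rw [if_neg hu, add_zero]
            calc I u * S12.G (d-2) (y - u)
                ≤ (C1 * S12.G (d-4) (u - w)) * S12.G (d-2) (y - u) :=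
                  mul_le_mul_left (hIbound u hu) _
              _ = C1 * (S12.G (d-4) (u - w) * S12.G (d-2) (u - y)) := by
                  rw [S12.G_sub_comm (d-2) y u]; ring
      _ = C1 * (∑' u : Fin d → ℤ, S12.G (d-4) (u - w) * S12.G (d-2) (u - y)) + C3 := by
          rw [ENNReal.tsum_add, ENNReal.tsum_mul_left, tsum_ite_eq w (fun _ => C3)]
      _ ≤ C1 * C2 + C3 := by
          refine add_le_add_left (mul_le_mul_right ?_ C1) C3
          have h := hC2 w y hwy
          rw [show (d-4) + (d-2) - d = d - 6 from by omega] at h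
          refine h.trans ?_
          calc C2 * (ENNReal.ofReal ‖w - y‖ ^ (d-6))⁻¹ ≤ C2 * 1 := by
                refine mul_le_mul_right (ENNReal.inv_le_one.mpr ?_) C2
                exact one_le_pow_of_one_le' hX1 _
            _ = C2 := mul_one _
  have hRHS : ENNReal.ofReal (max 1 Ctot.toReal * ‖w - y‖ ^ ((2 : ℝ) - d))
      = ENNReal.ofReal (max 1 Ctot.toReal) * P := by
    rw [ENNReal.ofReal_mul (le_trans zero_le_one (le_max_left _ _))]
    congr 1
    rw [S12.exp_cast hd2, S12.ofReal_pow_inv (by linarith : (0:ℝ) < ‖w - y‖) (d - 2)]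
  calc ∑' u : Fin d → ℤ, ∑' v : Fin d → ℤ,
        latPow (u - v) ((2 : ℝ) - d) * latPow (v - w) ((2 : ℝ) - d) *
          latPow (w - u) ((2 : ℝ) - d) * latPow (y - u) ((2 : ℝ) - d)
      = ∑' u : Fin d → ℤ, I u * (S12.G (d-2) (w - u) * S12.G (d-2) (y - u)) :=
        tsum_congr hrw
    _ ≤ ∑' u : Fin d → ℤ,
          (2^(d-2) * P * (I u * S12.G (d-2) (w - u) + I u * S12.G (d-2) (y - u))) := by
        refine ENNReal.tsum_le_tsum (fun u => ?_)
        calc I u * (S12.G (d-2) (w - u) * S12.G (d-2) (y - u))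
            ≤ I u * (2^(d-2) * P * (S12.G (d-2) (w - u) + S12.G (d-2) (y - u))) :=
              mul_le_mul_right (hkey u) _
          _ = 2^(d-2) * P * (I u * S12.G (d-2) (w - u) + I u * S12.G (d-2) (y - u)) := by ring
    _ = 2^(d-2) * P * ((∑' u : Fin d → ℤ, I u * S12.G (d-2) (w - u))
        + (∑' u : Fin d → ℤ, I u * S12.G (d-2) (y - u))) := by
        rw [ENNReal.tsum_mul_left, ENNReal.tsum_add]
    _ ≤ 2^(d-2) * P * (C1 * C4 + (C1 * C2 + C3)) :=
        mul_le_mul_right (add_le_add hL hM) _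
    _ = Ctot * P := by rw [hCtotdef]; ring
    _ ≤ ENNReal.ofReal (max 1 Ctot.toReal) * P := by
        refine mul_le_mul_left ?_ P
        calc Ctot = ENNReal.ofReal Ctot.toReal := (ENNReal.ofReal_toReal hCtotT).symm
          _ ≤ ENNReal.ofReal (max 1 Ctot.toReal) :=
            ENNReal.ofReal_le_ofReal (le_max_right _ _)
    _ = ENNReal.ofReal (max 1 Ctot.toReal * ‖w - y‖ ^ ((2 : ℝ) - d)) := hRHS.symm
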